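/- arXiv:2505.24159 — 2 statements merged into one kernel-verified Lean document; each statement's English description precedes it below -/
import Mathlib

section
/- Revenue neutrality for the single-bus model: if (g*, r*) with Lagrange multipliers (π0*, {πk*}) satisfy strong duality for the contingency-constrained dispatch LP, then (π0* + Σ_k πk*)·d = Σ_i [(π0* + Σ_k πk*)·g*_{i0} + (Σ_k πk*)·r*_i − Σ_{k ∈ K_i^OFF} πk*·(g*_{i0} + r*_i)], i.e., the total consumer payment equals the total generation revenue net of security charges. -/
open Finset

/-- Revenue neutrality for the single-bus model: under strong duality, the total
consumer payment equals total generation revenue net of security charges. -/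
theorem stmt4 {I K : Type*} [Fintype I] [Fintype K] [DecidableEq K]
    (c q g r : I → ℝ) (d π0 : ℝ) (π : K → ℝ) (a : I → K → ℝ)
    (ha : ∀ i k, a i k = 0 ∨ a i k = 1)
    (hSD : ∑ i, c i * g i + ∑ i, q i * r i =
      (π0 + ∑ k, π k) * d -
        ∑ i, ((π0 + ∑ k, π k * a i k - c i) * g i + ((∑ k, π k * a i k) - q i) * r i)) :
    (π0 + ∑ k, π k) * d =
      ∑ i, ((π0 + ∑ k, π k) * g i + (∑ k, π k) * r i
        - ∑ k ∈ univ.filter (fun k => a i k = 0), π k * (g i + r i)) := by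
  have key : ∀ i, ∑ k ∈ univ.filter (fun k => a i k = 0), π k * (g i + r i)
      = (∑ k, π k) * (g i + r i) - (∑ k, π k * a i k) * (g i + r i) := by
    intro i
    rw [Finset.sum_filter, ← sub_mul, ← Finset.sum_sub_distrib, Finset.sum_mul]
    apply Finset.sum_congr rfl
    intro k _
    rcases ha i k with h | h <;> simp [h]
  have h2 : ∑ i, ((π0 + ∑ k, π k) * g i + (∑ k, π k) * r i
        - ∑ k ∈ univ.filter (fun k => a i k = 0), π k * (g i + r i))
      = (∑ i, (c i * g i + q i * r i)) +
        ∑ i, ((π0 + ∑ k, π k * a i k - c i) * g i + ((∑ k, π k * a i k) - q i) * r i) := by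
    rw [← Finset.sum_add_distrib]
    apply Finset.sum_congr rfl
    intro i _
    rw [key i]; ring
  rw [h2, Finset.sum_add_distrib]
  linarith [hSD]
end

section
/- Under the proposed pricing scheme of the single-bus model, the aggregate security charge collected from all generators equals the aggregate up-spinning reserve revenue paid to generators: Σ_i Σ_{k ∈ K_i^OFF} πk*(g*_{i0} + r*_i) = (Σ_k πk*)·Σ_i r*_i, provided that for each contingency k with πk* > 0 the post-contingency balance is binding with full reserve deployment, i.e., Σ_{i : a_{ik}=1}(g*_{i0} + r*_i) = d and each available generator's post-contingency output is at its upper bound. -/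
open Finset

/-- Aggregate security charge equals aggregate up-spinning reserve revenue, when every
contingency `k` with positive price removes exactly one generator `out k` and the
post-contingency balance binds with full reserve deployment. -/
theorem stmt12 {I K : Type*} [Fintype I] [Fintype K] [DecidableEq I]
    (g r : I → ℝ) (π : K → ℝ) (d : ℝ) (out : K → I)
    (hπ : ∀ k, 0 ≤ π k) (hbal : ∑ i, g i = d)
    (hk : ∀ k, 0 < π k → ∑ i ∈ univ.erase (out k), (g i + r i) = d) :
    ∑ i, ∑ k ∈ univ.filter (fun k => out k = i), π k * (g i + r i) =
      (∑ k, π k) * ∑ i, r i := by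
  have key : ∀ k, π k * (g (out k) + r (out k)) = π k * ∑ i, r i := by
    intro k
    rcases eq_or_lt_of_le (hπ k) with h | h
    · rw [← h]; ring
    · have hb := hk k h
      have h1 : ∑ i ∈ univ.erase (out k), (g i + r i)
          = (∑ i, (g i + r i)) - (g (out k) + r (out k)) :=
        Finset.sum_erase_eq_sub (mem_univ _)
      have h2 : ∑ i, (g i + r i) = d + ∑ i, r i := by
        rw [Finset.sum_add_distrib, hbal]
      have : g (out k) + r (out k) = ∑ i, r i := by linarith
      rw [this]
  calc ∑ i, ∑ k ∈ univ.filter (fun k => out k = i), π k * (g i + r i)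
      = ∑ i, ∑ k ∈ univ.filter (fun k => out k = i), π k * (g (out k) + r (out k)) := by
        refine Finset.sum_congr rfl fun i _ => Finset.sum_congr rfl fun k hkmem => ?_
        rw [(Finset.mem_filter.mp hkmem).2]
    _ = ∑ k, π k * (g (out k) + r (out k)) := Finset.sum_fiberwise _ _ _
    _ = ∑ k, π k * ∑ i, r i := Finset.sum_congr rfl fun k _ => key k
    _ = (∑ k, π k) * ∑ i, r i := by rw [Finset.sum_mul]
end
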